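/- Let f ∈ H²_ω with f(0) ≠ 0, and suppose the first-order optimal polynomial approximant q₁ of 1/f has a zero z₁. Then z₁ = ‖zf‖²_ω / ⟨f, zf⟩_ω (in particular ⟨f, zf⟩_ω ≠ 0). -/

import Mathlib

open scoped BigOperators
open Polynomial Filter

noncomputable section

/-- Coefficient sequence of the product p·f, where f is an analytic function on the disk
given by its Taylor coefficient sequence. -/
def polyMulSeq (p : Polynomial ℂ) (f : ℕ → ℂ) : ℕ → ℂ :=
  fun n => ∑ j ∈ Finset.range (n + 1), p.coeff j * f (n - j)

/-- The constant function 1 as a Taylor coefficient sequence. -/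
def oneSeq : ℕ → ℂ := fun n => if n = 0 then 1 else 0

/-- Membership in the weighted Hardy space H²_ω. -/
def MemHw (ω : ℕ → ℝ) (f : ℕ → ℂ) : Prop :=
  Summable (fun k => ‖f k‖ ^ 2 * ω k)

/-- Squared weighted norm ‖f‖²_ω. -/
def wNormSq (ω : ℕ → ℝ) (f : ℕ → ℂ) : ℝ := ∑' k, ‖f k‖ ^ 2 * ω k

/-- Weighted inner product ⟨f,g⟩_ω. -/
def wInner (ω : ℕ → ℝ) (f g : ℕ → ℂ) : ℂ :=
  ∑' k, f k * (starRingEnd ℂ) (g k) * (ω k : ℂ)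

/-- `q` is the n-th optimal polynomial approximant of 1/f in H²_ω. -/
def IsOPA (ω : ℕ → ℝ) (f : ℕ → ℂ) (n : ℕ) (q : Polynomial ℂ) : Prop :=
  q.natDegree ≤ n ∧
  ∀ p : Polynomial ℂ, p.natDegree ≤ n →
    wNormSq ω (polyMulSeq q f - oneSeq) ≤ wNormSq ω (polyMulSeq p f - oneSeq)

/-! ### Auxiliary lemmas -/

lemma memHw_smul {ω : ℕ → ℝ} {f : ℕ → ℂ} (hf : MemHw ω f) (c : ℂ) :
    MemHw ω (fun k => c * f k) := by
  unfold MemHw at *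
  refine (hf.mul_left (‖c‖ ^ 2)).congr fun k => ?_
  simp [norm_mul, mul_pow]; ring

lemma memHw_add {ω : ℕ → ℝ} (hω : ∀ k, 0 ≤ ω k) {f g : ℕ → ℂ}
    (hf : MemHw ω f) (hg : MemHw ω g) : MemHw ω (fun k => f k + g k) := by
  unfold MemHw at *
  refine Summable.of_nonneg_of_le
    (fun k => mul_nonneg (by positivity) (hω k))
    (fun k => ?_) ((hf.mul_left 2).add (hg.mul_left 2))
  have h1 := norm_add_le (f k) (g k)
  have h2 := sq_nonneg (‖f k‖ - ‖g k‖)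
  have h3 := norm_nonneg (f k + g k)
  have h4 := norm_nonneg (f k)
  have h5 := norm_nonneg (g k)
  have h7 : ‖f k + g k‖ ^ 2 ≤ 2 * ‖f k‖ ^ 2 + 2 * ‖g k‖ ^ 2 := by nlinarith
  have h8 := mul_le_mul_of_nonneg_right h7 (hω k)
  nlinarith [h8]

lemma memHw_oneSeq (ω : ℕ → ℝ) : MemHw ω oneSeq := by
  unfold MemHw
  apply summable_of_ne_finset_zero (s := {0})
  intro k hk
  simp only [Finset.mem_singleton] at hk
  simp [oneSeq, hk]

lemma summable_cross {ω : ℕ → ℝ} (hω : ∀ k, 0 ≤ ω k) {f g : ℕ → ℂ}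
    (hf : MemHw ω f) (hg : MemHw ω g) :
    Summable (fun k => f k * (starRingEnd ℂ) (g k) * (ω k : ℂ)) := by
  apply Summable.of_norm
  refine Summable.of_nonneg_of_le (fun k => norm_nonneg _) (fun k => ?_) (hf.add hg)
  have : ‖f k * (starRingEnd ℂ) (g k) * (ω k : ℂ)‖ = ‖f k‖ * ‖g k‖ * ω k := by
    rw [norm_mul, norm_mul, RCLike.norm_conj, Complex.norm_real, Real.norm_eq_abs,
      abs_of_nonneg (hω k)]
  rw [this]
  have h4 := norm_nonneg (f k)
  have h5 := norm_nonneg (g k)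
  nlinarith [hω k, sq_nonneg (‖f k‖ - ‖g k‖)]

lemma wNormSq_nonneg (ω : ℕ → ℝ) (hω : ∀ k, 0 ≤ ω k) (f : ℕ → ℂ) : 0 ≤ wNormSq ω f :=
  tsum_nonneg fun k => mul_nonneg (by positivity) (hω k)

lemma normsq_expand (z w t : ℂ) :
    ‖z + t * w‖ ^ 2 = ‖z‖ ^ 2 + 2 * ((starRingEnd ℂ) t * (z * (starRingEnd ℂ) w)).re
      + ‖t‖ ^ 2 * ‖w‖ ^ 2 := by
  have h : ∀ u : ℂ, ‖u‖ ^ 2 = Complex.normSq u := fun u => by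
    rw [Complex.sq_norm]
  have e : z * (starRingEnd ℂ) (t * w) = (starRingEnd ℂ) t * (z * (starRingEnd ℂ) w) := by
    rw [map_mul]; ring
  rw [h (z + t * w), Complex.normSq_add, Complex.normSq_mul, e, h z, h t, h w]
  ring

/-- Orthogonality from minimality. -/
lemma orth_of_min {ω : ℕ → ℝ} (hω : ∀ k, 0 ≤ ω k) {g h : ℕ → ℂ}
    (hg : MemHw ω g) (hh : MemHw ω h)
    (hmin : ∀ t : ℂ, wNormSq ω g ≤ wNormSq ω (fun k => g k + t * h k)) :
    wInner ω g h = 0 := by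
  set c := wInner ω g h with hc
  set N := wNormSq ω h with hN
  have hN0 : 0 ≤ N := wNormSq_nonneg ω hω h
  have hcross : Summable (fun k => g k * (starRingEnd ℂ) (h k) * (ω k : ℂ)) :=
    summable_cross hω hg hh
  -- expansion
  have hexp : ∀ t : ℂ, wNormSq ω (fun k => g k + t * h k)
      = wNormSq ω g + 2 * ((starRingEnd ℂ) t * c).re + ‖t‖ ^ 2 * N := by
    intro t
    have hpt : ∀ k, ‖g k + t * h k‖ ^ 2 * ω k
        = ‖g k‖ ^ 2 * ω k
          + 2 * ((starRingEnd ℂ) t * (g k * (starRingEnd ℂ) (h k) * (ω k : ℂ))).re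
          + ‖t‖ ^ 2 * (‖h k‖ ^ 2 * ω k) := by
      intro k
      have h1 : (starRingEnd ℂ) t * (g k * (starRingEnd ℂ) (h k) * (ω k : ℂ))
          = (ω k : ℂ) * ((starRingEnd ℂ) t * (g k * (starRingEnd ℂ) (h k))) := by ring
      rw [h1, Complex.re_ofReal_mul, normsq_expand]
      ring
    have hs2 : Summable (fun k =>
        2 * ((starRingEnd ℂ) t * (g k * (starRingEnd ℂ) (h k) * (ω k : ℂ))).re) := by
      exact (((hcross.mul_left ((starRingEnd ℂ) t)).mapL Complex.reCLM)).mul_left 2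
    have hs3 : Summable (fun k => ‖t‖ ^ 2 * (‖h k‖ ^ 2 * ω k)) := hh.mul_left _
    have hB : (∑' k, 2 * ((starRingEnd ℂ) t * (g k * (starRingEnd ℂ) (h k) * (ω k : ℂ))).re)
        = 2 * ((starRingEnd ℂ) t * c).re := by
      rw [tsum_mul_left]
      congr 1
      rw [← Complex.re_tsum (hcross.mul_left _), tsum_mul_left]
      rfl
    have hC : (∑' k, ‖t‖ ^ 2 * (‖h k‖ ^ 2 * ω k)) = ‖t‖ ^ 2 * N := by
      rw [tsum_mul_left]; rfl
    calc wNormSq ω (fun k => g k + t * h k)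
        = ∑' k, (‖g k‖ ^ 2 * ω k
          + (2 * ((starRingEnd ℂ) t * (g k * (starRingEnd ℂ) (h k) * (ω k : ℂ))).re
          + ‖t‖ ^ 2 * (‖h k‖ ^ 2 * ω k))) := tsum_congr fun k => by rw [hpt k]; ring
      _ = (∑' k, ‖g k‖ ^ 2 * ω k)
          + ((∑' k, 2 * ((starRingEnd ℂ) t * (g k * (starRingEnd ℂ) (h k) * (ω k : ℂ))).re)
          + (∑' k, ‖t‖ ^ 2 * (‖h k‖ ^ 2 * ω k))) := by
          rw [Summable.tsum_add hg (hs2.add hs3), Summable.tsum_add hs2 hs3]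
      _ = wNormSq ω g + 2 * ((starRingEnd ℂ) t * c).re + ‖t‖ ^ 2 * N := by
          rw [hB, hC, ← add_assoc]; rfl
  -- choose t
  by_contra hc0
  set ε : ℝ := 1 / (N + 1) with hε
  have hεpos : 0 < ε := by positivity
  have hεN : ε * (N + 1) = 1 := by
    have hne : N + 1 ≠ 0 := by linarith
    rw [hε, one_div, inv_mul_cancel₀ hne]
  have key := hmin ((-ε : ℝ) * c)
  rw [hexp] at key
  have h1 : ((starRingEnd ℂ) (((-ε : ℝ) : ℂ) * c) * c).re = -ε * ‖c‖ ^ 2 := by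
    have e : (starRingEnd ℂ) (((-ε : ℝ) : ℂ) * c) * c
        = (((-ε) * ‖c‖ ^ 2 : ℝ) : ℂ) := by
      rw [map_mul, Complex.conj_ofReal, mul_assoc, mul_comm ((starRingEnd ℂ) c) c,
        Complex.mul_conj']
      push_cast; ring
    rw [e, Complex.ofReal_re]
  have h2 : ‖((-ε : ℝ) : ℂ) * c‖ ^ 2 = ε ^ 2 * ‖c‖ ^ 2 := by
    rw [norm_mul, Complex.norm_real, Real.norm_eq_abs, abs_neg,
      abs_of_pos hεpos, mul_pow]
  rw [h1, h2] at key
  have hcn : 0 < ‖c‖ ^ 2 := by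
    have := norm_pos_iff.mpr hc0
    positivity
  have hεN' : ε * N = 1 - ε := by linear_combination hεN
  have e2 : ε ^ 2 * ‖c‖ ^ 2 * N = (1 - ε) * (ε * ‖c‖ ^ 2) := by
    calc ε ^ 2 * ‖c‖ ^ 2 * N = (ε * N) * (ε * ‖c‖ ^ 2) := by ring
      _ = (1 - ε) * (ε * ‖c‖ ^ 2) := by rw [hεN']
  nlinarith [key, e2, mul_pos hεpos hcn,
    mul_pos (show (0:ℝ) < 1 + ε by linarith) (mul_pos hεpos hcn)]

lemma polyMulSeq_C (a : ℂ) (f : ℕ → ℂ) : polyMulSeq (C a) f = fun n => a * f n := by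
  funext n
  unfold polyMulSeq
  rw [Finset.sum_eq_single_of_mem 0 (Finset.mem_range.mpr (Nat.succ_pos n))]
  · simp
  · intro j _ hj
    simp [Polynomial.coeff_C, hj]

lemma polyMulSeq_add (p p' : Polynomial ℂ) (f : ℕ → ℂ) :
    polyMulSeq (p + p') f = fun n => polyMulSeq p f n + polyMulSeq p' f n := by
  funext n
  unfold polyMulSeq
  simp [Polynomial.coeff_add, add_mul, Finset.sum_add_distrib]

lemma polyMulSeq_C_mul (c : ℂ) (p : Polynomial ℂ) (f : ℕ → ℂ) :
    polyMulSeq (C c * p) f = fun n => c * polyMulSeq p f n := by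
  funext n
  unfold polyMulSeq
  simp [Polynomial.coeff_C_mul, mul_assoc, Finset.mul_sum]

lemma polyMulSeq_X_zero (f : ℕ → ℂ) : polyMulSeq X f 0 = 0 := by
  simp [polyMulSeq]

lemma polyMulSeq_X_succ (f : ℕ → ℂ) (n : ℕ) : polyMulSeq X f (n + 1) = f n := by
  unfold polyMulSeq
  rw [Finset.sum_eq_single_of_mem 1 (Finset.mem_range.mpr (by omega))]
  · simp
  · intro j _ hj
    simp [Polynomial.coeff_X, Ne.symm hj]

lemma wInner_self (ω : ℕ → ℝ) (u : ℕ → ℂ) : wInner ω u u = (wNormSq ω u : ℂ) := by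
  unfold wInner wNormSq
  rw [Complex.ofReal_tsum]
  refine tsum_congr fun k => ?_
  rw [Complex.mul_conj']
  push_cast
  ring

lemma wInner_add_left {ω : ℕ → ℝ} {u v w : ℕ → ℂ}
    (hu : Summable (fun k => u k * (starRingEnd ℂ) (w k) * (ω k : ℂ)))
    (hv : Summable (fun k => v k * (starRingEnd ℂ) (w k) * (ω k : ℂ))) :
    wInner ω (fun k => u k + v k) w = wInner ω u w + wInner ω v w := by
  unfold wInner
  rw [← Summable.tsum_add hu hv]
  exact tsum_congr fun k => by ring

lemma wInner_smul_left (ω : ℕ → ℝ) (c : ℂ) (u w : ℕ → ℂ) :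
    wInner ω (fun k => c * u k) w = c * wInner ω u w := by
  unfold wInner
  rw [← tsum_mul_left]
  exact tsum_congr fun k => by ring

lemma wInner_oneSeq (ω : ℕ → ℝ) (w : ℕ → ℂ) :
    wInner ω oneSeq w = (starRingEnd ℂ) (w 0) * (ω 0 : ℂ) := by
  unfold wInner
  rw [tsum_eq_single 0]
  · simp [oneSeq]
  · intro k hk
    simp [oneSeq, hk]

/-- A zero z₁ of the first-order opa of 1/f satisfies z₁ = ‖zf‖²_ω / ⟨f, zf⟩_ω. -/
theorem stmt_11 (ω : ℕ → ℝ) (hω0 : ω 0 = 1) (hωpos : ∀ k, 0 < ω k)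
    (f : ℕ → ℂ) (hf : MemHw ω f) (hf0 : f 0 ≠ 0)
    (hzf : MemHw ω (polyMulSeq Polynomial.X f))
    (q : Polynomial ℂ) (hq : IsOPA ω f 1 q)
    (z₁ : ℂ) (hz : q.eval z₁ = 0) :
    wInner ω f (polyMulSeq Polynomial.X f) ≠ 0 ∧
    z₁ = (wNormSq ω (polyMulSeq Polynomial.X f) : ℂ) /
          wInner ω f (polyMulSeq Polynomial.X f) := by
  obtain ⟨hdeg, hmin⟩ := hq
  have hω : ∀ k, 0 ≤ ω k := fun k => (hωpos k).le
  set zf : ℕ → ℂ := polyMulSeq X f with hzfdef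
  set a : ℂ := q.coeff 0 with ha
  set b : ℂ := q.coeff 1 with hb
  have hq_eq : q = C b * X + C a :=
    Polynomial.eq_X_add_C_of_degree_le_one (Polynomial.natDegree_le_iff_degree_le.mp hdeg)
  have hqf : polyMulSeq q f = fun k => b * zf k + a * f k := by
    rw [hq_eq, polyMulSeq_add, polyMulSeq_C_mul, polyMulSeq_C]
  -- the residual g
  set g : ℕ → ℂ := fun k => polyMulSeq q f k - oneSeq k with hgdef
  have hgeq : g = fun k => b * zf k + (a * f k + (-1) * oneSeq k) := by
    funext k; rw [hgdef, hqf]; ring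
  have hmem_bzf : MemHw ω (fun k => b * zf k) := memHw_smul hzf b
  have hmem_af : MemHw ω (fun k => a * f k) := memHw_smul hf a
  have hmem_negone : MemHw ω (fun k => (-1 : ℂ) * oneSeq k) :=
    memHw_smul (memHw_oneSeq ω) (-1)
  have hmem_rest : MemHw ω (fun k => a * f k + (-1 : ℂ) * oneSeq k) :=
    memHw_add hω hmem_af hmem_negone
  have hg : MemHw ω g := by
    rw [hgeq]; exact memHw_add hω hmem_bzf hmem_rest
  -- minimality gives orthogonality against f and zf
  have horth : ∀ p₀ : Polynomial ℂ, p₀.natDegree ≤ 1 →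
      wInner ω g (polyMulSeq p₀ f) = 0 := by
    intro p₀ hp₀
    have hh : MemHw ω (polyMulSeq p₀ f) := by
      have h01 : p₀ = C (p₀.coeff 1) * X + C (p₀.coeff 0) :=
        Polynomial.eq_X_add_C_of_degree_le_one (Polynomial.natDegree_le_iff_degree_le.mp hp₀)
      have : polyMulSeq p₀ f = fun k => p₀.coeff 1 * zf k + p₀.coeff 0 * f k := by
        conv_lhs => rw [h01, polyMulSeq_add, polyMulSeq_C_mul, polyMulSeq_C]
      rw [this]
      exact memHw_add hω (memHw_smul hzf _) (memHw_smul hf _)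
    refine orth_of_min hω hg hh fun t => ?_
    have hdegp : (q + C t * p₀).natDegree ≤ 1 := by
      refine le_trans (Polynomial.natDegree_add_le _ _) ?_
      simp only [sup_le_iff]
      exact ⟨hdeg, le_trans (Polynomial.natDegree_C_mul_le _ _) hp₀⟩
    have := hmin (q + C t * p₀) hdegp
    have heq1 : polyMulSeq q f - oneSeq = g := by funext k; rfl
    have heq2 : polyMulSeq (q + C t * p₀) f - oneSeq
        = fun k => g k + t * polyMulSeq p₀ f k := by
      funext k
      rw [polyMulSeq_add, polyMulSeq_C_mul]
      show polyMulSeq q f k + t * polyMulSeq p₀ f k - oneSeq k = _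
      rw [hgdef]; ring
    rw [heq1, heq2] at this
    exact this
  have hc₁ : wInner ω g f = 0 := by
    have := horth (C 1) (by simp)
    rwa [polyMulSeq_C, show (fun n => (1:ℂ) * f n) = f from funext fun n => one_mul _] at this
  have hc₂ : wInner ω g zf = 0 := horth X (by simp)
  -- cross summabilities
  have crossz : ∀ u : ℕ → ℂ, MemHw ω u →
      Summable (fun k => u k * (starRingEnd ℂ) (zf k) * (ω k : ℂ)) :=
    fun u hu => summable_cross hω hu hzf
  -- expand hc₂
  have hexp₂ : b * (wNormSq ω zf : ℂ) + a * wInner ω f zf = 0 := by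
    have e1 : wInner ω g zf
        = wInner ω (fun k => b * zf k) zf
          + wInner ω (fun k => a * f k + (-1) * oneSeq k) zf := by
      rw [hgeq]
      exact wInner_add_left (crossz _ hmem_bzf) (crossz _ hmem_rest)
    have e2 : wInner ω (fun k => a * f k + (-1 : ℂ) * oneSeq k) zf
        = wInner ω (fun k => a * f k) zf + wInner ω (fun k => (-1 : ℂ) * oneSeq k) zf :=
      wInner_add_left (crossz _ hmem_af) (crossz _ hmem_negone)
    have e3 : wInner ω (fun k => b * zf k) zf = b * (wNormSq ω zf : ℂ) := by
      rw [wInner_smul_left, wInner_self]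
    have e4 : wInner ω (fun k => a * f k) zf = a * wInner ω f zf := wInner_smul_left ω a f zf
    have e5 : wInner ω (fun k => (-1 : ℂ) * oneSeq k) zf = 0 := by
      rw [wInner_smul_left, wInner_oneSeq]
      rw [show zf 0 = 0 from polyMulSeq_X_zero f]
      simp
    rw [e1, e2, e3, e4, e5] at hc₂
    linear_combination hc₂
  -- b ≠ 0
  have hbne : b ≠ 0 := by
    intro hb0
    have haz : a = 0 := by
      have heval : b * z₁ + a = 0 := by
        have := hz
        rw [hq_eq] at this
        simpa using this
      rw [hb0] at heval
      linear_combination heval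
    -- then g = -oneSeq, contradicting hc₁
    have hg' : g = fun k => (-1 : ℂ) * oneSeq k := by
      rw [hgeq, hb0, haz]; funext k; ring
    rw [hg', wInner_smul_left, wInner_oneSeq, hω0] at hc₁
    simp only [Complex.ofReal_one, mul_one, neg_mul, one_mul, neg_eq_zero] at hc₁
    exact hf0 (by simpa using congrArg (starRingEnd ℂ) hc₁)
  -- a = -(b * z₁)
  have haeq : a = -(b * z₁) := by
    have heval : b * z₁ + a = 0 := by
      have := hz
      rw [hq_eq] at this
      simpa using this
    linear_combination heval
  -- key equation: z₁ * ⟨f, zf⟩ = ‖zf‖²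
  have hkey : z₁ * wInner ω f zf = (wNormSq ω zf : ℂ) := by
    rw [haeq] at hexp₂
    have : b * ((wNormSq ω zf : ℂ) - z₁ * wInner ω f zf) = 0 := by linear_combination hexp₂
    have := mul_eq_zero.mp this
    rcases this with h | h
    · exact absurd h hbne
    · linear_combination -h
  -- ‖zf‖² > 0
  have hNpos : 0 < wNormSq ω zf := by
    have hterm : ‖zf 1‖ ^ 2 * ω 1 ≤ wNormSq ω zf :=
      Summable.le_tsum hzf 1 fun j _ => mul_nonneg (by positivity) (hω j)
    have hzf1 : zf 1 = f 0 := polyMulSeq_X_succ f 0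
    have : 0 < ‖zf 1‖ ^ 2 * ω 1 := by
      rw [hzf1]
      exact mul_pos (pow_pos (norm_pos_iff.mpr hf0) 2) (hωpos 1)
    linarith
  have hcne : wInner ω f zf ≠ 0 := by
    intro h0
    rw [h0, mul_zero] at hkey
    have : wNormSq ω zf = 0 := by exact_mod_cast hkey.symm
    linarith
  refine ⟨hcne, ?_⟩
  rw [eq_div_iff hcne]
  exact hkey
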